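/- Let Γ be an infinite virtually cyclic group acting by homeomorphisms on a nonempty compact Hausdorff space X, and suppose the action has the marker property. Then the dynamic asymptotic dimension of the action equals 1; that is, (i) for every finite subset E ⊆ Γ there exist open sets U_0, U_1 covering X such that F(U_0, E) and F(U_1, E) are finite, and (ii) there exists a finite subset E ⊆ Γ such that F(X, E) is infinite (so no single open set works). -/

import Mathlib

open Pointwise

/-- The set F(U,E): elements `g = gₙ⋯g₁` with each `gⱼ ∈ E` such that for some `x ∈ U`
all partial translates `gⱼ⋯g₁ • x` (j = 1,…,n) remain in `U`. -/
def dynF {Γ X : Type*} [Group Γ] [MulAction Γ X] (U : Set X) (E : Set Γ) : Set Γ :=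
  {g | ∃ L : List Γ, L ≠ [] ∧ (∀ h ∈ L, h ∈ E) ∧ g = L.reverse.prod ∧
    ∃ x ∈ U, ∀ j : ℕ, 1 ≤ j → j ≤ L.length → (L.take j).reverse.prod • x ∈ U}

/-- The marker property for an action. -/
def MarkerProperty (Γ X : Type*) [Group Γ] [MulAction Γ X] [TopologicalSpace X] : Prop :=
  ∀ F : Finset Γ, ∃ U : Set X, IsOpen U ∧
    (F : Set Γ).PairwiseDisjoint (fun g => g • U) ∧ (⋃ g : Γ, g • U) = Set.univ

/-- The dynamic asymptotic dimension is at most `d`. -/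
def DadLE (Γ X : Type*) [Group Γ] [MulAction Γ X] [TopologicalSpace X] (d : ℕ) : Prop :=
  ∀ E : Finset Γ, ∃ U : Fin (d + 1) → Set X, (∀ i, IsOpen (U i)) ∧
    (⋃ i, U i) = Set.univ ∧ ∀ i, (dynF (U i) (E : Set Γ)).Finite

/-- The dynamic asymptotic dimension, as an extended natural number (`⊤` if no `d` works). -/
noncomputable def dad (Γ X : Type*) [Group Γ] [MulAction Γ X] [TopologicalSpace X] : ℕ∞ :=
  sInf ((fun d : ℕ => (d : ℕ∞)) '' {d : ℕ | DadLE Γ X d})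

/-- A group is virtually cyclic if it has a cyclic subgroup of finite index. -/
def IsVirtuallyCyclic (Γ : Type*) [Group Γ] : Prop :=
  ∃ H : Subgroup Γ, IsCyclic H ∧ H.FiniteIndex

/-- The covering dimension of `X` is at most `n`: every open cover admits an open
refinement covering `X` in which every point belongs to at most `n+1` members. -/
def CovDimLE (X : Type*) [TopologicalSpace X] (n : ℕ) : Prop :=
  ∀ 𝒰 : Set (Set X), (∀ U ∈ 𝒰, IsOpen U) → ⋃₀ 𝒰 = Set.univ →
    ∃ 𝒱 : Set (Set X), (∀ V ∈ 𝒱, IsOpen V) ∧ ⋃₀ 𝒱 = Set.univ ∧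
      (∀ V ∈ 𝒱, ∃ U ∈ 𝒰, V ⊆ U) ∧
      ∀ x : X, ∃ s : Finset (Set X), {V ∈ 𝒱 | x ∈ V} ⊆ ↑s ∧ s.card ≤ n + 1

section AuxOxide

open Subgroup

private lemma vc_struct (Γ : Type*) [Group Γ] [Infinite Γ]
    (hvc : IsVirtuallyCyclic Γ) :
    ∃ a : Γ, ¬IsOfFinOrder a ∧ (zpowers a).Normal ∧ (zpowers a).FiniteIndex := by
  obtain ⟨H, hcyc, hfi⟩ := hvc
  haveI := hcyc; haveI := hfi
  set K := H.normalCore with hKdef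
  haveI hKn : K.Normal := H.normalCore_normal
  haveI hKfi : K.FiniteIndex := inferInstance
  haveI : IsCyclic K := by
    have hle : K ≤ H := H.normalCore_le
    exact isCyclic_of_surjective (Subgroup.subgroupOfEquivOfLe hle).toMonoidHom
      (Subgroup.subgroupOfEquivOfLe hle).surjective
  haveI hKinf : Infinite K := by
    by_contra hfin
    haveI : Finite K := not_infinite_iff_finite.mp hfin
    haveI : Finite (Γ ⧸ K) := inferInstance
    haveI : Finite Γ :=
      Finite.of_equiv _ (Subgroup.groupEquivQuotientProdSubgroup (s := K)).symm
    exact not_finite Γ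
  obtain ⟨g₀, hg₀⟩ := IsCyclic.exists_generator (α := K)
  have hz : zpowers (g₀ : Γ) = K := by
    apply le_antisymm
    · exact zpowers_le.2 g₀.2
    · intro x hx
      obtain ⟨m, hm⟩ := mem_zpowers_iff.1 (hg₀ ⟨x, hx⟩)
      have : ((g₀ : Γ)) ^ m = x := by
        have := congrArg (Subtype.val) hm
        simpa using this
      exact ⟨m, this⟩
  refine ⟨(g₀ : Γ), ?_, by rw [hz]; exact hKn, by rw [hz]; exact hKfi⟩
  intro hord
  have hfin : (zpowers (g₀ : Γ) : Set Γ).Finite := by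
    have := hord.finite_zpowers
    simpa using this
  rw [hz] at hfin
  haveI : Finite K := hfin.to_subtype
  exact not_finite K


private lemma vc_phi {Γ : Type*} [Group Γ] (a : Γ) (hord : ¬IsOfFinOrder a)
    (hnorm : (zpowers a).Normal) (hfi : (zpowers a).FiniteIndex) :
    ∃ (φ σ : Γ → ℤ) (C : ℤ), 0 ≤ C ∧
      (∀ g, σ g = 1 ∨ σ g = -1) ∧
      (∀ u v, |φ (u * v) - φ u - σ u * φ v| ≤ C) ∧
      (∀ (m : ℤ) (g : Γ), φ (a ^ m * g) = m + φ g) ∧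
      (∀ n : ℤ, {g : Γ | |φ g| ≤ n}.Finite) := by
  haveI := hnorm; haveI := hfi
  set K := zpowers a with hK
  haveI : Finite (Γ ⧸ K) := inferInstance
  have hinj : Function.Injective fun n : ℤ => a ^ n :=
    injective_zpow_iff_not_isOfFinOrder.2 hord
  set τ : (Γ ⧸ K) → Γ := Quotient.out with hτ
  have hmkτ : ∀ q : Γ ⧸ K, (QuotientGroup.mk (τ q) : Γ ⧸ K) = q := fun q =>
    QuotientGroup.out_eq' q
  have hrep : ∀ g : Γ, ∃ n : ℤ, g = a ^ n * τ (QuotientGroup.mk g) := by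
    intro g
    have h1 : (QuotientGroup.mk (g * (τ (QuotientGroup.mk g))⁻¹) : Γ ⧸ K) = 1 := by
      rw [QuotientGroup.mk_mul, QuotientGroup.mk_inv, hmkτ, mul_inv_cancel]
    have h2 : g * (τ (QuotientGroup.mk g))⁻¹ ∈ K := (QuotientGroup.eq_one_iff _).1 h1
    obtain ⟨n, hn⟩ := mem_zpowers_iff.1 h2
    refine ⟨n, ?_⟩
    rw [hn]; group
  choose φ hφ using hrep
  have huniq : ∀ (g : Γ) (n : ℤ), g = a ^ n * τ (QuotientGroup.mk g) → n = φ g := by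
    intro g n h
    have h2 : a ^ n * τ (QuotientGroup.mk g) = a ^ φ g * τ (QuotientGroup.mk g) :=
      h.symm.trans (hφ g)
    exact hinj (mul_right_cancel h2)
  have hconj : ∀ g : Γ, ∃ s : ℤ, g * a * g⁻¹ = a ^ s := by
    intro g
    obtain ⟨s, hs⟩ := mem_zpowers_iff.1 (hnorm.conj_mem a (mem_zpowers a) g)
    exact ⟨s, hs.symm⟩
  choose σ hσ using hconj
  have hσzpow : ∀ (g : Γ) (m : ℤ), g * a ^ m * g⁻¹ = a ^ (σ g * m) := by
    intro g m
    have h1 : (g * a * g⁻¹) ^ m = g * a ^ m * g⁻¹ := conj_zpow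
    rw [← h1, hσ g, ← zpow_mul]
  have hσpm : ∀ g, σ g = 1 ∨ σ g = -1 := by
    intro g
    have h1 : g⁻¹ * a * g ∈ K := by
      have := hnorm.conj_mem a (mem_zpowers a) g⁻¹
      simpa using this
    obtain ⟨m, hm⟩ := mem_zpowers_iff.1 h1
    have h2 : a ^ (σ g * m) = a ^ (1 : ℤ) := by
      calc a ^ (σ g * m) = g * a ^ m * g⁻¹ := (hσzpow g m).symm
        _ = g * (g⁻¹ * a * g) * g⁻¹ := by rw [hm]
        _ = a := by group
        _ = a ^ (1 : ℤ) := (zpow_one a).symm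
    have h3 : σ g * m = 1 := hinj h2
    exact Int.isUnit_iff.1 (IsUnit.of_mul_eq_one _ h3)
  have hσa : ∀ (n : ℤ) (t : Γ), σ (a ^ n * t) = σ t := by
    intro n t
    apply hinj
    show a ^ σ (a ^ n * t) = a ^ σ t
    calc a ^ σ (a ^ n * t) = (a ^ n * t) * a * (a ^ n * t)⁻¹ := (hσ _).symm
      _ = a ^ n * (t * a * t⁻¹) * a ^ (-n) := by group
      _ = a ^ n * a ^ σ t * a ^ (-n) := by rw [hσ t]
      _ = a ^ σ t := by group
  have hkey : ∀ u v : Γ, φ (u * v) =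
      φ u + σ u * φ v + φ (τ (QuotientGroup.mk u) * τ (QuotientGroup.mk v)) := by
    intro u v
    set tu := τ (QuotientGroup.mk u) with htu
    set tv := τ (QuotientGroup.mk v) with htv
    set w := tu * tv with hw
    have e4 : (QuotientGroup.mk w : Γ ⧸ K) = QuotientGroup.mk (u * v) := by
      rw [hw, QuotientGroup.mk_mul, hmkτ, hmkτ, ← QuotientGroup.mk_mul]
    have e6 : σ tu = σ u := by
      have h := hσa (φ u) tu
      rw [← hφ u] at h
      exact h.symm
    have h1 : u * v = a ^ (φ u + σ u * φ v + φ w) * τ (QuotientGroup.mk (u * v)) := by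
      calc u * v = (a ^ φ u * tu) * (a ^ φ v * tv) := by rw [← hφ u, ← hφ v]
        _ = a ^ φ u * (tu * a ^ φ v * tu⁻¹) * (tu * tv) := by group
        _ = a ^ φ u * a ^ (σ u * φ v) * w := by rw [hσzpow, e6, ← hw]
        _ = a ^ φ u * a ^ (σ u * φ v) * (a ^ φ w * τ (QuotientGroup.mk w)) := by
              rw [← hφ w]
        _ = a ^ (φ u + σ u * φ v + φ w) * τ (QuotientGroup.mk (u * v)) := by
              rw [e4]; group
    exact (huniq _ _ h1).symm
  obtain ⟨C0, hC0⟩ := Finite.exists_le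
    (fun p : (Γ ⧸ K) × (Γ ⧸ K) => |φ (τ p.1 * τ p.2)|)
  refine ⟨φ, σ, max C0 0, le_max_right _ _, hσpm, ?_, ?_, ?_⟩
  · intro u v
    have h1 : φ (u * v) - φ u - σ u * φ v =
        φ (τ (QuotientGroup.mk u) * τ (QuotientGroup.mk v)) := by
      rw [hkey u v]; ring
    rw [h1]
    exact le_trans (hC0 (QuotientGroup.mk u, QuotientGroup.mk v)) (le_max_left _ _)
  · intro m g
    have e4 : (QuotientGroup.mk (a ^ m * g) : Γ ⧸ K) = QuotientGroup.mk g := by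
      rw [QuotientGroup.mk_mul]
      have : (QuotientGroup.mk (a ^ m) : Γ ⧸ K) = 1 :=
        (QuotientGroup.eq_one_iff _).2 (zpow_mem (mem_zpowers a) m)
      rw [this, one_mul]
    have h : a ^ m * g = a ^ (m + φ g) * τ (QuotientGroup.mk (a ^ m * g)) := by
      rw [e4]
      calc a ^ m * g = a ^ m * (a ^ φ g * τ (QuotientGroup.mk g)) := by rw [← hφ g]
        _ = a ^ (m + φ g) * τ (QuotientGroup.mk g) := by rw [← mul_assoc, ← zpow_add]
    exact (huniq _ _ h).symm
  · intro n
    have hsub : {g : Γ | |φ g| ≤ n} ⊆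
        (fun p : ℤ × (Γ ⧸ K) => a ^ p.1 * τ p.2) '' (Set.Icc (-n) n ×ˢ Set.univ) := by
      intro g hg
      refine ⟨(φ g, QuotientGroup.mk g), ⟨?_, Set.mem_univ _⟩, (hφ g).symm⟩
      rw [Set.mem_Icc]
      exact abs_le.1 hg
    exact Set.Finite.subset (Set.Finite.image _
      ((Set.finite_Icc _ _).prod Set.finite_univ)) hsub


private lemma take_prod_succ {Γ : Type*} [Group Γ] (L : List Γ) (j : ℕ) (hj : j < L.length) :
    (L.take (j + 1)).reverse.prod = L[j] * (L.take j).reverse.prod := by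
  rw [List.take_succ, List.getElem?_eq_getElem hj]
  rw [Option.toList_some, List.reverse_append, List.reverse_singleton,
    List.singleton_append, List.prod_cons]

private lemma dyn_main {Γ X : Type*} [Group Γ] [TopologicalSpace X] [CompactSpace X]
    [T2Space X] [MulAction Γ X] [ContinuousConstSMul Γ X]
    (a : Γ) (φ σ : Γ → ℤ) (C : ℤ) (hC : 0 ≤ C)
    (hσpm : ∀ g, σ g = 1 ∨ σ g = -1)
    (hcoc : ∀ u v, |φ (u * v) - φ u - σ u * φ v| ≤ C)
    (hpow : ∀ (m : ℤ) (g : Γ), φ (a ^ m * g) = m + φ g)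
    (hfib : ∀ n : ℤ, {g : Γ | |φ g| ≤ n}.Finite)
    (hmarker : MarkerProperty Γ X) (E : Finset Γ) :
    ∃ U₀ U₁ : Set X, IsOpen U₀ ∧ IsOpen U₁ ∧ U₀ ∪ U₁ = Set.univ ∧
      (dynF U₀ (E : Set Γ)).Finite ∧ (dynF U₁ (E : Set Γ)).Finite := by
  classical
  -- constants
  set M2 : ℤ := ((E.sup fun e => (φ e).natAbs : ℕ) : ℤ) with hM2def
  have hM2 : ∀ e ∈ (E : Set Γ), |φ e| ≤ M2 := by
    intro e he
    rw [Int.abs_eq_natAbs, hM2def]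
    exact_mod_cast Nat.cast_le.mpr (Finset.le_sup (f := fun e => (φ e).natAbs) he)
  have hM2n : 0 ≤ M2 := Int.natCast_nonneg _
  set M1 : ℤ := M2 + C with hM1def
  set ρ : ℤ := M1 + 1 with hρdef
  set K0 : ℤ := 6 * M1 + 8 * C + 12 with hK0def
  -- basic φ lemmas
  have hφ1 : |φ 1| ≤ C := by
    have h2 := hcoc 1 1
    rw [one_mul] at h2
    rcases hσpm 1 with h | h <;> rw [h] at h2 <;>
      (first
        | (have h3 := abs_le.mp h2; rw [abs_le]; omega))
  have hstep : ∀ e y : Γ, e ∈ (E : Set Γ) → |φ (e * y) - σ e * φ y| ≤ M1 := by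
    intro e y he
    have h1 := abs_le.mp (hcoc e y)
    have h2 := abs_le.mp (hM2 e he)
    rcases hσpm e with h | h <;> rw [h] at h1 ⊢ <;> (rw [abs_le]; omega)
  have hpb : ∀ p w : Γ, |φ p| ≤ |φ (p * w)| + |φ w| + C := by
    intro p w
    have h1 := abs_le.mp (hcoc p w)
    have h2 := le_abs_self (φ (p * w))
    have h3 := neg_abs_le (φ (p * w))
    have h4 := le_abs_self (φ w)
    have h5 := neg_abs_le (φ w)
    rcases hσpm p with h | h <;> rw [h] at h1 <;> (rw [abs_le]; omega)
  have hdiff_le : ∀ p u v : Γ, |φ (p * u) - φ (p * v)| ≤ |φ u - φ v| + 2 * C := by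
    intro p u v
    have h1 := abs_le.mp (hcoc p u)
    have h2 := abs_le.mp (hcoc p v)
    have h4 := le_abs_self (φ u - φ v)
    have h5 := neg_abs_le (φ u - φ v)
    rcases hσpm p with h | h <;> rw [h] at h1 h2 <;> (rw [abs_le]; omega)
  have hdiff_ge : ∀ p u v : Γ, |φ u - φ v| - 2 * C ≤ |φ (p * u) - φ (p * v)| := by
    intro p u v
    have h1 := abs_le.mp (hcoc p u)
    have h2 := abs_le.mp (hcoc p v)
    rcases abs_cases (φ u - φ v) with ⟨h6, h7⟩ | ⟨h6, h7⟩ <;> rw [h6] <;>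
      rcases hσpm p with h | h <;> rw [h] at h1 h2 <;> (rw [le_abs]; omega)
  -- markers
  set FKs : Finset Γ := (hfib K0).toFinset with hFKdef
  obtain ⟨V, hVopen, hVdisj, hVcover⟩ := hmarker FKs
  have hsep0 : ∀ (y : X) (w w' : Γ), w⁻¹ • y ∈ V → w'⁻¹ • y ∈ V → w ≠ w' →
      K0 < |φ (w'⁻¹ * w)| := by
    intro y w w' hw hw' hne
    by_contra hle
    push_neg at hle
    have hmem : w'⁻¹ * w ∈ (FKs : Set Γ) := by
      rw [hFKdef, Finset.mem_coe, Set.Finite.mem_toFinset]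
      exact hle
    have h1m : (1 : Γ) ∈ (FKs : Set Γ) := by
      rw [hFKdef, Finset.mem_coe, Set.Finite.mem_toFinset]
      show |φ 1| ≤ K0
      omega
    have hne1 : w'⁻¹ * w ≠ 1 := by
      intro hh
      exact hne (inv_mul_eq_one.mp hh).symm
    have hdisj := hVdisj hmem h1m hne1
    have hm1 : w'⁻¹ • y ∈ (w'⁻¹ * w) • V := by
      have h := Set.smul_mem_smul_set (a := w'⁻¹ * w) hw
      rwa [smul_smul, mul_assoc, mul_inv_cancel, mul_one] at h
    have hm2 : w'⁻¹ • y ∈ (1 : Γ) • V := by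
      rw [one_smul]; exact hw'
    exact (Set.disjoint_left.mp hdisj hm1) hm2
  have hsepφ : ∀ (y : X) (w w' : Γ), w⁻¹ • y ∈ V → w'⁻¹ • y ∈ V → w ≠ w' →
      K0 - 3 * C < |φ w - φ w'| := by
    intro y w w' hw hw' hne
    have h0 := lt_abs.mp (hsep0 y w w' hw hw' hne)
    have h2 := abs_le.mp (hcoc w'⁻¹ w)
    have h3' := hcoc w'⁻¹ w'
    rw [inv_mul_cancel] at h3'
    have h3 := abs_le.mp h3'
    have h5 := abs_le.mp hφ1
    rcases hσpm w'⁻¹ with h | h <;> rw [h] at h2 h3 <;> (rw [lt_abs]; omega)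
  have hsepT : ∀ (y : X) (p w w' : Γ), w⁻¹ • y ∈ V → w'⁻¹ • y ∈ V → w ≠ w' →
      K0 - 5 * C < |φ (p * w) - φ (p * w')| := by
    intro y p w w' hw hw' hne
    have h1 := hsepφ y w w' hw hw' hne
    have h2 := hdiff_ge p w w'
    omega
  -- compact core Cs of V
  have hcov : ∀ x : X, ∃ g : Γ, g⁻¹ • x ∈ V := by
    intro x
    have hx : x ∈ ⋃ g : Γ, g • V := by rw [hVcover]; exact Set.mem_univ x
    obtain ⟨g, hg⟩ := Set.mem_iUnion.1 hx
    exact ⟨g, (Set.mem_smul_set_iff_inv_smul_mem).1 hg⟩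
  choose gx hgx using hcov
  have hcpt : ∀ x : X, ∃ Kc : Set X, IsCompact Kc ∧ x ∈ interior Kc ∧ Kc ⊆ (gx x) • V := by
    intro x
    exact exists_compact_subset (hVopen.smul _)
      ((Set.mem_smul_set_iff_inv_smul_mem).2 (hgx x))
  choose Kc hKc1 hKc2 hKc3 using hcpt
  have hcov2 : (Set.univ : Set X) ⊆ ⋃ x : X, interior (Kc x) := fun y _ =>
    Set.mem_iUnion.2 ⟨y, hKc2 y⟩
  obtain ⟨t, ht⟩ := isCompact_univ.elim_finite_subcover (fun x => interior (Kc x))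
    (fun x => isOpen_interior) hcov2
  set Cs : Set X := ⋃ x ∈ t, (gx x)⁻¹ • Kc x with hCsdef
  have hCc : IsCompact Cs := by
    rw [hCsdef]
    apply t.isCompact_biUnion
    intro x _
    rw [← Set.image_smul]
    exact (hKc1 x).image (continuous_const_smul _)
  have hCclosed : IsClosed Cs := hCc.isClosed
  have hCsubV : Cs ⊆ V := by
    rw [hCsdef]
    intro y hy
    obtain ⟨x, _, hy2⟩ := Set.mem_iUnion₂.1 hy
    obtain ⟨z, hz, rfl⟩ := hy2
    obtain ⟨v, hv, rfl⟩ := hKc3 x hz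
    simpa [smul_smul] using hv
  set S : Finset Γ := t.image gx with hSdef
  have hCcover : ∀ y : X, ∃ g ∈ S, g⁻¹ • y ∈ Cs := by
    intro y
    have hy : y ∈ ⋃ x ∈ t, interior (Kc x) := ht (Set.mem_univ y)
    obtain ⟨x, hx, hyx⟩ := Set.mem_iUnion₂.1 hy
    refine ⟨gx x, Finset.mem_image_of_mem _ hx, ?_⟩
    rw [hCsdef]
    exact Set.mem_iUnion₂.2 ⟨x, hx, Set.smul_mem_smul_set (interior_subset hyx)⟩
  set RS : ℤ := ((S.sup fun g => (φ g).natAbs : ℕ) : ℤ) with hRSdef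
  have hRS : ∀ g ∈ S, |φ g| ≤ RS := by
    intro g hg
    rw [Int.abs_eq_natAbs, hRSdef]
    exact_mod_cast Nat.cast_le.mpr (Finset.le_sup (f := fun g => (φ g).natAbs) hg)
  have hRSn : 0 ≤ RS := Int.natCast_nonneg _
  have hdens : ∀ (x : X) (m : ℤ), ∃ w : Γ, w⁻¹ • x ∈ Cs ∧ |φ w - m| ≤ RS := by
    intro x m
    obtain ⟨g, hgS, hg⟩ := hCcover ((a ^ (-m)) • x)
    refine ⟨a ^ m * g, ?_, ?_⟩
    · rw [mul_inv_rev, mul_smul, ← zpow_neg]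
      exact hg
    · rw [hpow m g]
      simpa using hRS g hgS
  set ρm : ℤ := 2 * RS + ρ + 1 with hρmdef
  set D : ℤ := 3 * ρm + 2 * ρ + 6 * C with hDdef
  -- the two sets
  set H0 : Finset Γ := (hfib ρ).toFinset with hH0def
  set U0 : Set X := ⋃ h ∈ H0, h • V with hU0def
  set U1 : Set X := (⋃ h ∈ H0, h • Cs)ᶜ with hU1def
  have hU0open : IsOpen U0 := by
    rw [hU0def]
    exact isOpen_biUnion fun h _ => hVopen.smul h
  have hU1open : IsOpen U1 := by
    rw [hU1def]
    exact (isClosed_biUnion_finset fun h _ => hCclosed.smul h).isOpen_compl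
  have hU0mem : ∀ y : X, y ∈ U0 ↔ ∃ h : Γ, |φ h| ≤ ρ ∧ h⁻¹ • y ∈ V := by
    intro y
    rw [hU0def]
    constructor
    · intro hy
      obtain ⟨h, hh, hy2⟩ := Set.mem_iUnion₂.1 hy
      exact ⟨h, (Set.Finite.mem_toFinset (hfib ρ)).1 hh,
        (Set.mem_smul_set_iff_inv_smul_mem).1 hy2⟩
    · rintro ⟨h, hh, hy2⟩
      exact Set.mem_iUnion₂.2 ⟨h, (Set.Finite.mem_toFinset (hfib ρ)).2 hh,
        (Set.mem_smul_set_iff_inv_smul_mem).2 hy2⟩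
  have hU1mem : ∀ y : X, y ∈ U1 ↔ ∀ h : Γ, |φ h| ≤ ρ → h⁻¹ • y ∉ Cs := by
    intro y
    rw [hU1def, Set.mem_compl_iff]
    constructor
    · intro hy h hh hy2
      exact hy (Set.mem_iUnion₂.2 ⟨h, (Set.Finite.mem_toFinset (hfib ρ)).2 hh,
        (Set.mem_smul_set_iff_inv_smul_mem).2 hy2⟩)
    · intro hy hy2
      obtain ⟨h, hh, hy3⟩ := Set.mem_iUnion₂.1 hy2
      exact hy h ((Set.Finite.mem_toFinset (hfib ρ)).1 hh)
        ((Set.mem_smul_set_iff_inv_smul_mem).1 hy3)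
  have hcover : U0 ∪ U1 = Set.univ := by
    apply Set.eq_univ_of_forall
    intro y
    by_cases hy : y ∈ U1
    · exact Or.inr hy
    · left
      rw [hU1mem] at hy
      push_neg at hy
      obtain ⟨h, hh1, hh2⟩ := hy
      exact (hU0mem y).2 ⟨h, hh1, hCsubV hh2⟩
  refine ⟨U0, U1, hU0open, hU1open, hcover, ?_, ?_⟩
  -- ============ U0 finiteness ============
  · apply Set.Finite.subset (hfib D)
    rintro g ⟨L, hL0, hLE, hgL, x, hxU, hch⟩
    set n := L.length with hn
    have hn1 : 1 ≤ n := by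
      rw [hn]
      exact List.length_pos_iff.2 hL0
    have hwit : ∀ j : ℕ, ∃ w : Γ,
        j ≤ n → (w⁻¹ • x ∈ V ∧ |φ ((L.take j).reverse.prod * w)| ≤ ρ) := by
      intro j
      by_cases hj : j ≤ n
      · rcases Nat.eq_zero_or_pos j with rfl | hj1
        · rw [hU0mem] at hxU
          obtain ⟨h, hh1, hh2⟩ := hxU
          refine ⟨h, fun _ => ⟨hh2, ?_⟩⟩
          simpa using hh1
        · have hx2 := hch j hj1 hj
          rw [hU0mem] at hx2
          obtain ⟨h, hh1, hh2⟩ := hx2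
          refine ⟨((L.take j).reverse.prod)⁻¹ * h, fun _ => ⟨?_, ?_⟩⟩
          · rw [mul_inv_rev, inv_inv, mul_smul]
            exact hh2
          · rw [mul_inv_cancel_left]
            exact hh1
      · exact ⟨1, fun hcon => absurd hcon hj⟩
    choose w hw using hwit
    have hconst : ∀ j, j ≤ n → w j = w 0 := by
      intro j
      induction j with
      | zero => intro _; rfl
      | succ j ih =>
        intro hj
        have hjn : j ≤ n := Nat.le_of_succ_le hj
        have hjlt : j < L.length := by omega
        rw [← ih hjn]
        by_contra hne
        obtain ⟨hwV, hwB⟩ := hw (j + 1) hj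
        obtain ⟨hwV', hwB'⟩ := hw j hjn
        have heE : L[j] ∈ (E : Set Γ) := hLE _ (List.getElem_mem hjlt)
        have hsb := hstep (L[j]) ((L.take j).reverse.prod * w j) heE
        have hre : (L.take (j + 1)).reverse.prod * w j =
            L[j] * ((L.take j).reverse.prod * w j) := by
          rw [take_prod_succ L j hjlt, mul_assoc]
        have hT := hsepT x ((L.take (j + 1)).reverse.prod) (w (j + 1)) (w j) hwV hwV' hne
        rw [hre] at hT
        have h1 := abs_le.mp hwB
        have h2 := abs_le.mp hwB'
        have h4 := lt_abs.mp hT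
        rcases hσpm (L[j]) with hs | hs <;> rw [hs] at hsb <;>
          (have h3 := abs_le.mp hsb; omega)
    have hwB0 : |φ (w 0)| ≤ ρ := by
      obtain ⟨_, hwB0'⟩ := hw 0 (Nat.zero_le n)
      simpa using hwB0'
    obtain ⟨_, hwBn⟩ := hw n le_rfl
    rw [hconst n le_rfl] at hwBn
    have hgn : g = (L.take n).reverse.prod := by
      rw [hgL, hn, List.take_length]
    have hfin := hpb ((L.take n).reverse.prod) (w 0)
    show |φ g| ≤ D
    rw [hgn]
    omega
  -- ============ U1 finiteness ============
  · apply Set.Finite.subset (hfib D)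
    rintro g ⟨L, hL0, hLE, hgL, x, hxU, hch⟩
    set n := L.length with hn
    have hn1 : 1 ≤ n := by
      rw [hn]
      exact List.length_pos_iff.2 hL0
    have hdep : ∀ j, j ≤ n → ∀ v : Γ, v⁻¹ • x ∈ Cs →
        ρ < |φ ((L.take j).reverse.prod * v)| := by
      intro j hj v hv
      by_contra hle
      push_neg at hle
      have hxj : (L.take j).reverse.prod • x ∈ U1 := by
        rcases Nat.eq_zero_or_pos j with rfl | hj1
        · simpa using hxU
        · exact hch j hj1 hj
      rw [hU1mem] at hxj
      refine hxj ((L.take j).reverse.prod * v) hle ?_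
      rw [mul_inv_rev, mul_smul, inv_smul_smul]
      exact hv
    -- initial gap endpoints A (negative side) and B (positive side)
    have hSA : ∃ A : Γ, (A⁻¹ • x ∈ Cs ∧ -ρm ≤ φ A ∧ φ A < 0) ∧
        ∀ v : Γ, v⁻¹ • x ∈ Cs → φ A < φ v → ¬(φ v < 0) := by
      set SA : Set Γ := {v : Γ | v⁻¹ • x ∈ Cs ∧ -ρm ≤ φ v ∧ φ v < 0} with hSAdef
      have hfinA : SA.Finite := by
        apply (hfib ρm).subset
        rintro v ⟨_, h1, h2⟩
        rw [Set.mem_setOf, abs_le]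
        omega
      have hneA : SA.Nonempty := by
        obtain ⟨v, hv1, hv2⟩ := hdens x (-(RS + ρ + 1))
        have hv3 := abs_le.mp hv2
        exact ⟨v, hv1, by omega, by omega⟩
      obtain ⟨A, hAmem, hAmax⟩ := Finset.exists_max_image hfinA.toFinset φ
        (by rwa [Set.Finite.toFinset_nonempty])
      rw [Set.Finite.mem_toFinset] at hAmem
      obtain ⟨hA1, hA2, hA3⟩ := hAmem
      refine ⟨A, ⟨hA1, hA2, hA3⟩, ?_⟩
      intro v hv1 hv2 hv3
      have hvmem : v ∈ hfinA.toFinset := by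
        rw [Set.Finite.mem_toFinset]
        exact ⟨hv1, by omega, hv3⟩
      have := hAmax v hvmem
      omega
    have hSB : ∃ B : Γ, (B⁻¹ • x ∈ Cs ∧ 0 < φ B ∧ φ B ≤ ρm) ∧
        ∀ v : Γ, v⁻¹ • x ∈ Cs → φ v < φ B → ¬(0 < φ v) := by
      set SB : Set Γ := {v : Γ | v⁻¹ • x ∈ Cs ∧ 0 < φ v ∧ φ v ≤ ρm} with hSBdef
      have hfinB : SB.Finite := by
        apply (hfib ρm).subset
        rintro v ⟨_, h1, h2⟩
        rw [Set.mem_setOf, abs_le]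
        omega
      have hneB : SB.Nonempty := by
        obtain ⟨v, hv1, hv2⟩ := hdens x (RS + ρ + 1)
        have hv3 := abs_le.mp hv2
        exact ⟨v, hv1, by omega, by omega⟩
      obtain ⟨B, hBmem, hBmin⟩ := Finset.exists_min_image hfinB.toFinset φ
        (by rwa [Set.Finite.toFinset_nonempty])
      rw [Set.Finite.mem_toFinset] at hBmem
      obtain ⟨hB1, hB2, hB3⟩ := hBmem
      refine ⟨B, ⟨hB1, hB2, hB3⟩, ?_⟩
      intro v hv1 hv2 hv3
      have hvmem : v ∈ hfinB.toFinset := by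
        rw [Set.Finite.mem_toFinset]
        exact ⟨hv1, hv3, by omega⟩
      have := hBmin v hvmem
      omega
    obtain ⟨A, ⟨hACs, hA1, hA2⟩, hAmax⟩ := hSA
    obtain ⟨B, ⟨hBCs, hB1, hB2⟩, hBmin⟩ := hSB
    have hAV : A⁻¹ • x ∈ V := hCsubV hACs
    have hBV : B⁻¹ • x ∈ V := hCsubV hBCs
    have hInv : ∀ j, j ≤ n →
        ((φ ((L.take j).reverse.prod * A) < 0 ∧ 0 < φ ((L.take j).reverse.prod * B)) ∨
         (φ ((L.take j).reverse.prod * B) < 0 ∧ 0 < φ ((L.take j).reverse.prod * A))) ∧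
        ∀ v : Γ, v⁻¹ • x ∈ Cs →
          ¬((φ ((L.take j).reverse.prod * A) < φ ((L.take j).reverse.prod * v) ∧
             φ ((L.take j).reverse.prod * v) < φ ((L.take j).reverse.prod * B)) ∨
            (φ ((L.take j).reverse.prod * B) < φ ((L.take j).reverse.prod * v) ∧
             φ ((L.take j).reverse.prod * v) < φ ((L.take j).reverse.prod * A))) := by
      intro j
      induction j with
      | zero =>
        intro _
        simp only [List.take_zero, List.reverse_nil, List.prod_nil, one_mul]
        refine ⟨Or.inl ⟨hA2, hB1⟩, ?_⟩
        intro v hv hbet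
        rcases hbet with ⟨h1, h2⟩ | ⟨h1, h2⟩
        · rcases lt_trichotomy (φ v) 0 with h | h | h
          · exact hAmax v hv h1 h
          · have hd := hdep 0 (Nat.zero_le n) v hv
            simp only [List.take_zero, List.reverse_nil, List.prod_nil, one_mul] at hd
            rw [h] at hd
            simp at hd
            omega
          · exact hBmin v hv h2 h
        · omega
      | succ j ih =>
        intro hj
        have hjn : j ≤ n := Nat.le_of_succ_le hj
        have hjlt : j < L.length := by omega
        obtain ⟨istrad, ibet⟩ := ih hjn
        have heE : L[j] ∈ (E : Set Γ) := hLE _ (List.getElem_mem hjlt)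
        have hre : ∀ v : Γ, (L.take (j + 1)).reverse.prod * v =
            L[j] * ((L.take j).reverse.prod * v) := by
          intro v
          rw [take_prod_succ L j hjlt, mul_assoc]
        have hsA := hstep (L[j]) ((L.take j).reverse.prod * A) heE
        have hsB := hstep (L[j]) ((L.take j).reverse.prod * B) heE
        have hdA := lt_abs.mp (hdep j hjn A hACs)
        have hdB := lt_abs.mp (hdep j hjn B hBCs)
        constructor
        · rw [hre A, hre B]
          rcases hσpm (L[j]) with hs | hs <;> rw [hs] at hsA hsB <;>
            (have h1 := abs_le.mp hsA; have h2 := abs_le.mp hsB; omega)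
        · intro v hv hbet
          by_cases hvA : v = A
          · rw [hvA] at hbet
            omega
          by_cases hvB : v = B
          · rw [hvB] at hbet
            omega
          have hs1 := lt_abs.mp (hsepT x ((L.take j).reverse.prod) v A
            (hCsubV hv) hAV hvA)
          have hs2 := lt_abs.mp (hsepT x ((L.take j).reverse.prod) v B
            (hCsubV hv) hBV hvB)
          have hsv := hstep (L[j]) ((L.take j).reverse.prod * v) heE
          have hnb := ibet v hv
          rw [hre A, hre B, hre v] at hbet
          rcases hσpm (L[j]) with hs | hs <;> rw [hs] at hsA hsB hsv <;>
            (have h1 := abs_le.mp hsA; have h2 := abs_le.mp hsB;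
             have h3 := abs_le.mp hsv; omega)
    -- final bound
    obtain ⟨istrad, _⟩ := hInv n le_rfl
    have hgn : g = (L.take n).reverse.prod := by
      rw [hgL, hn, List.take_length]
    have hd1 := hdiff_le ((L.take n).reverse.prod) A B
    have hd2 := abs_le.mp hd1
    have hAB : |φ A - φ B| ≤ 2 * ρm := by
      rw [abs_le]
      omega
    have hpA := hpb ((L.take n).reverse.prod) A
    have hphiA : |φ A| ≤ ρm := by
      rw [abs_le]
      omega
    have hα : |φ ((L.take n).reverse.prod * A)| ≤ 2 * ρm + 2 * C := by
      rw [abs_le]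
      omega
    show |φ g| ≤ D
    rw [hgn]
    omega

end AuxOxide

/-- For an infinite virtually cyclic group acting on a nonempty compact
Hausdorff space with the marker property, the dynamic asymptotic dimension equals 1. -/
theorem dad_eq_one_of_markerProperty
    (Γ X : Type*) [Group Γ] [Infinite Γ]
    [TopologicalSpace X] [CompactSpace X] [T2Space X] [Nonempty X]
    [MulAction Γ X] [ContinuousConstSMul Γ X]
    (hvc : IsVirtuallyCyclic Γ) (hmarker : MarkerProperty Γ X) :
    (∀ E : Finset Γ, ∃ U₀ U₁ : Set X, IsOpen U₀ ∧ IsOpen U₁ ∧ U₀ ∪ U₁ = Set.univ ∧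
        (dynF U₀ (E : Set Γ)).Finite ∧ (dynF U₁ (E : Set Γ)).Finite) ∧
    (∃ E : Finset Γ, (dynF (Set.univ : Set X) (E : Set Γ)).Infinite) := by
  obtain ⟨a, hord, hnorm, hfi⟩ := vc_struct Γ hvc
  obtain ⟨φ, σ, C, hC, hσpm, hcoc, hpow, hfib⟩ := vc_phi a hord hnorm hfi
  constructor
  · intro E
    exact dyn_main a φ σ C hC hσpm hcoc hpow hfib hmarker E
  · refine ⟨{a}, ?_⟩
    have hinjN : Function.Injective fun n : ℕ => a ^ n :=
      injective_pow_iff_not_isOfFinOrder.2 hord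
    have hinj : Function.Injective fun n : ℕ => a ^ (n + 1) := by
      intro m n h
      have := hinjN (show a ^ (m + 1) = a ^ (n + 1) from h)
      omega
    apply Set.infinite_of_injective_forall_mem hinj
    intro n
    refine ⟨List.replicate (n + 1) a, by simp, ?_, ?_,
      Classical.arbitrary X, Set.mem_univ _, fun j _ _ => Set.mem_univ _⟩
    · intro h hh
      rw [List.eq_of_mem_replicate hh]
      simp
    · rw [List.reverse_replicate, List.prod_replicate]
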